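/- MTE representation of welfare: under the stated assumptions, W(G) = E[Y₀] + E[1{Z ∈ G} ∫₀¹ MTE(u, X) du] for every decision set G, where MTE(u,x) = E[Y₁ − Y₀ | U = u, X = x]. -/

import Mathlib

open MeasureTheory Filter Topology
open scoped ENNReal NNReal

section Aux

lemma comap_prod_mk' {Ω α β : Type*} [MeasurableSpace α] [MeasurableSpace β]
    (f : Ω → α) (g : Ω → β) :
    MeasurableSpace.comap (fun ω => (f ω, g ω)) inferInstance
      = MeasurableSpace.comap f inferInstance ⊔ MeasurableSpace.comap g inferInstance := by
  show MeasurableSpace.comap _ (MeasurableSpace.prod _ _) = _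
  rw [MeasurableSpace.prod, MeasurableSpace.comap_sup, MeasurableSpace.comap_comp,
    MeasurableSpace.comap_comp]
  rfl

lemma trunc_tendsto (t : ℝ) :
    Tendsto (fun n : ℕ => max (-(n : ℝ)) (min (n : ℝ) t)) atTop (nhds t) := by
  have h : (fun n : ℕ => max (-(n : ℝ)) (min (n : ℝ) t)) =ᶠ[atTop] fun _ => t := by
    filter_upwards [eventually_ge_atTop ⌈|t|⌉₊] with n hn
    have h1 : |t| ≤ (n : ℝ) := le_trans (Nat.le_ceil _) (by exact_mod_cast hn)
    rw [min_eq_right (le_trans (le_abs_self t) h1),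
      max_eq_right (le_trans (neg_le_neg h1) (neg_abs_le t))]
  exact Tendsto.congr' h.symm tendsto_const_nhds

lemma trunc_abs_le (n : ℕ) (t : ℝ) : |max (-(n : ℝ)) (min (n : ℝ) t)| ≤ |t| := by
  rw [abs_le]
  constructor
  · exact le_max_of_le_right
      (le_min (le_trans (neg_nonpos.2 (abs_nonneg t)) (Nat.cast_nonneg n)) (neg_abs_le t))
  · exact max_le (le_trans (neg_nonpos.2 (Nat.cast_nonneg n)) (abs_nonneg t))
      (le_trans (min_le_right _ _) (le_abs_self t))

lemma trunc_abs_le_n (n : ℕ) (t : ℝ) : |max (-(n : ℝ)) (min (n : ℝ) t)| ≤ (n : ℝ) :=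
  abs_le.2 ⟨le_max_left _ _, max_le (neg_le_self (Nat.cast_nonneg n)) (min_le_left _ _)⟩

lemma sup_ofReal_min (t : ℝ) :
    ⨆ n : ℕ, ENNReal.ofReal (min (n : ℝ) |t|) = ENNReal.ofReal |t| := by
  apply le_antisymm
  · exact iSup_le fun n => ENNReal.ofReal_le_ofReal (min_le_right _ _)
  · have h : ENNReal.ofReal |t| = ENNReal.ofReal (min ((⌈|t|⌉₊ : ℕ) : ℝ) |t|) := by
      rw [min_eq_right (Nat.le_ceil _)]
    rw [h]
    exact le_iSup (fun n : ℕ => ENNReal.ofReal (min ((n : ℕ) : ℝ) |t|)) ⌈|t|⌉₊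

end Aux

open Classical in
/-- MTE representation of welfare: under (i) `U | Z ~ Uniform[0,1]` (encoded via conditional
expectations of bounded measurable functions of `(U, X)` given `Z`), and (ii) the exclusion
restriction `E[Y_d | Z, U] = E[Y_d | X, U]`, one has
`W(G) = E[Y₀] + E[1{Z ∈ G} ∫₀¹ MTE(u, X) du]` for every measurable decision set `G`. -/
theorem MTE_representation_of_welfare {Ω γ δ : Type*} [MeasurableSpace Ω] [MeasurableSpace γ]
    [MeasurableSpace δ] (μ : Measure Ω) [IsProbabilityMeasure μ]
    (Z : Ω → γ × δ) (U : Ω → ℝ) (Y₀ Y₁ : Ω → ℝ)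
    (hZ : Measurable Z) (hU : Measurable U)
    (hY₀ : MemLp Y₀ 2 μ) (hY₁ : MemLp Y₁ 2 μ)
    (X : Ω → δ) (hX : ∀ ω, X ω = (Z ω).2)
    -- (i) U is uniformly distributed on [0,1] conditionally on Z:
    (hunif : ∀ g : ℝ × δ → ℝ, Measurable g → (∃ C : ℝ, ∀ p, |g p| ≤ C) →
      μ[fun ω => g (U ω, X ω) | MeasurableSpace.comap Z inferInstance]
        =ᵐ[μ] fun ω => ∫ u in (0:ℝ)..1, g (u, X ω))
    -- (ii) exclusion restriction:
    (hexcl : ∀ Y ∈ ({Y₀, Y₁} : Set (Ω → ℝ)),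
      μ[Y | MeasurableSpace.comap (fun ω => (Z ω, U ω)) inferInstance]
        =ᵐ[μ] μ[Y | MeasurableSpace.comap (fun ω => (X ω, U ω)) inferInstance])
    -- MTE(u,x) is a version of E[Y₁ - Y₀ | U = u, X = x]:
    (MTE : ℝ → δ → ℝ) (hMTEmeas : Measurable (fun p : ℝ × δ => MTE p.1 p.2))
    (hMTEver : μ[fun ω => Y₁ ω - Y₀ ω |
        MeasurableSpace.comap (fun ω => (U ω, X ω)) inferInstance]
      =ᵐ[μ] fun ω => MTE (U ω) (X ω)) :
    ∀ G : Set (γ × δ), MeasurableSet G →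
      (∫ ω, (if Z ω ∈ G then Y₁ ω else Y₀ ω) ∂μ)
        = (∫ ω, Y₀ ω ∂μ)
          + ∫ ω, (if Z ω ∈ G then ∫ u in (0:ℝ)..1, MTE u (X ω) else 0) ∂μ := by
  intro G hG
  have hXm : Measurable X := by
    have hXe : X = fun ω => (Z ω).2 := funext hX
    rw [hXe]; exact measurable_snd.comp hZ
  have hY₀i : Integrable Y₀ μ := hY₀.integrable one_le_two
  have hY₁i : Integrable Y₁ μ := hY₁.integrable one_le_two
  have hDi : Integrable (fun ω => Y₁ ω - Y₀ ω) μ := hY₁i.sub hY₀i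
  have hmZ : MeasurableSpace.comap Z inferInstance ≤ ‹MeasurableSpace Ω› := hZ.comap_le
  have hmZU : MeasurableSpace.comap (fun ω => (Z ω, U ω)) inferInstance
      ≤ ‹MeasurableSpace Ω› := (hZ.prodMk hU).comap_le
  have hswap : MeasurableSpace.comap (fun ω => (X ω, U ω)) inferInstance
      = MeasurableSpace.comap (fun ω => (U ω, X ω)) inferInstance := by
    rw [comap_prod_mk' X U, comap_prod_mk' U X, sup_comm]
  -- conditional expectation of the "treatment effect" given (Z, U)
  have hcond : (μ[fun ω => Y₁ ω - Y₀ ω |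
        MeasurableSpace.comap (fun ω => (Z ω, U ω)) inferInstance])
      =ᵐ[μ] fun ω => MTE (U ω) (X ω) := by
    have h1 := condExp_sub (m := MeasurableSpace.comap (fun ω => (Z ω, U ω)) inferInstance)
      (μ := μ) hY₁i hY₀i
    have h2 := condExp_sub (m := MeasurableSpace.comap (fun ω => (U ω, X ω)) inferInstance)
      (μ := μ) hY₁i hY₀i
    have hx₀ := hexcl Y₀ (Set.mem_insert _ _)
    have hx₁ := hexcl Y₁ (Set.mem_insert_of_mem _ rfl)
    rw [hswap] at hx₀ hx₁
    calc (μ[fun ω => Y₁ ω - Y₀ ω | _]) =ᵐ[μ] _ := h1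
      _ =ᵐ[μ] (μ[Y₁ | MeasurableSpace.comap (fun ω => (U ω, X ω)) inferInstance])
          - (μ[Y₀ | MeasurableSpace.comap (fun ω => (U ω, X ω)) inferInstance]) :=
        hx₁.sub hx₀
      _ =ᵐ[μ] (μ[fun ω => Y₁ ω - Y₀ ω |
          MeasurableSpace.comap (fun ω => (U ω, X ω)) inferInstance]) := h2.symm
      _ =ᵐ[μ] fun ω => MTE (U ω) (X ω) := hMTEver
  have hAm : MeasurableSet (Z ⁻¹' G) := hZ hG
  have hA_mZ : MeasurableSet[MeasurableSpace.comap Z inferInstance] (Z ⁻¹' G) := ⟨G, hG, rfl⟩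
  have hA_mZU : MeasurableSet[MeasurableSpace.comap
      (fun ω => (Z ω, U ω)) inferInstance] (Z ⁻¹' G) :=
    ⟨G ×ˢ Set.univ, hG.prod MeasurableSet.univ, by ext ω; simp⟩
  have hfm : Measurable (fun ω => MTE (U ω) (X ω)) := hMTEmeas.comp (hU.prodMk hXm)
  have hfi : Integrable (fun ω => MTE (U ω) (X ω)) μ := (integrable_condExp).congr hcond
  -- Key 1 : ∫_A (Y₁ - Y₀) = ∫_A MTE(U, X)
  have key1 : ∫ ω in Z ⁻¹' G, (Y₁ ω - Y₀ ω) ∂μ = ∫ ω in Z ⁻¹' G, MTE (U ω) (X ω) ∂μ := by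
    rw [← setIntegral_condExp hmZU hDi hA_mZU]
    exact integral_congr_ae (ae_restrict_of_ae hcond)

  -- abbreviations
  have habs_min : ∀ (n : ℕ) (t : ℝ), abs (min (n : ℝ) |t|) ≤ (n : ℝ) := fun n t =>
    abs_le.2 ⟨le_min (neg_le_self (Nat.cast_nonneg n))
        (le_trans (neg_nonpos.2 (Nat.cast_nonneg n)) (abs_nonneg _)), min_le_left _ _⟩
  have hφm : ∀ n : ℕ, Measurable (fun p : ℝ × δ => max (-(n:ℝ)) (min (n:ℝ) (MTE p.1 p.2))) :=
    fun n => Measurable.max measurable_const (Measurable.min measurable_const hMTEmeas)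
  -- identity for truncations over A
  have hEq : ∀ n : ℕ, (∫ ω in Z ⁻¹' G, max (-(n:ℝ)) (min (n:ℝ) (MTE (U ω) (X ω))) ∂μ)
      = ∫ ω in Z ⁻¹' G,
          (∫ u in Set.Ioc (0:ℝ) 1, max (-(n:ℝ)) (min (n:ℝ) (MTE u (X ω)))) ∂μ := by
    intro n
    have hInt : Integrable (fun ω => max (-(n:ℝ)) (min (n:ℝ) (MTE (U ω) (X ω)))) μ :=
      ⟨((hφm n).comp (hU.prodMk hXm)).aestronglyMeasurable,
        HasFiniteIntegral.of_bounded (C := (n:ℝ)) (ae_of_all _ fun ω => by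
          simpa [Real.norm_eq_abs] using trunc_abs_le_n n (MTE (U ω) (X ω)))⟩
    have h := hunif _ (hφm n) ⟨n, fun p => trunc_abs_le_n n _⟩
    rw [← setIntegral_condExp hmZ hInt hA_mZ]
    exact integral_congr_ae (ae_restrict_of_ae (h.trans (Filter.Eventually.of_forall fun ω =>
      intervalIntegral.integral_of_le (zero_le_one : (0:ℝ) ≤ 1))))
  -- identity for absolute truncations over the whole space
  have hψEq : ∀ n : ℕ, (∫ ω, min (n:ℝ) |MTE (U ω) (X ω)| ∂μ)
      = ∫ ω, (∫ u in Set.Ioc (0:ℝ) 1, min (n:ℝ) |MTE u (X ω)|) ∂μ := by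
    intro n
    have hm : Measurable (fun p : ℝ × δ => min (n:ℝ) |MTE p.1 p.2|) :=
      measurable_const.min hMTEmeas.abs
    have hInt : Integrable (fun ω => min (n:ℝ) |MTE (U ω) (X ω)|) μ :=
      ⟨(hm.comp (hU.prodMk hXm)).aestronglyMeasurable,
        HasFiniteIntegral.of_bounded (C := (n:ℝ)) (ae_of_all _ fun ω => by
          simpa [Real.norm_eq_abs] using habs_min n (MTE (U ω) (X ω)))⟩
    have h := hunif _ hm ⟨n, fun p => habs_min n _⟩
    have hci := integral_condExp (μ := μ) (f := fun ω => min (n:ℝ) |MTE (U ω) (X ω)|) hmZ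
    rw [← hci]
    exact integral_congr_ae (h.trans (Filter.Eventually.of_forall fun ω =>
      intervalIntegral.integral_of_le (zero_le_one : (0:ℝ) ≤ 1)))

  -- the dominating function for the inner integrals
  set F : Ω → ℝ≥0∞ := fun ω => ∫⁻ u in Set.Ioc (0:ℝ) 1, ENNReal.ofReal |MTE u (X ω)|
    with hFdef
  have hMuX : ∀ ω, Measurable (fun u : ℝ => MTE u (X ω)) := fun ω =>
    hMTEmeas.comp (measurable_id.prodMk measurable_const)
  have hFm : Measurable F := by
    apply Measurable.lintegral_prod_right (f := fun ω u => ENNReal.ofReal |MTE u (X ω)|)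
    exact ENNReal.measurable_ofReal.comp
      ((hMTEmeas.comp (measurable_snd.prodMk (hXm.comp measurable_fst))).abs)
  haveI : IsFiniteMeasure ((volume : Measure ℝ).restrict (Set.Ioc (0:ℝ) 1)) := by
    constructor
    rw [Measure.restrict_apply_univ]
    simp [Real.volume_Ioc]
  -- finiteness of ∫⁻ F via monotone convergence and the uniformity identity
  have hsup_le : (∫⁻ ω, F ω ∂μ) ≤ ENNReal.ofReal (∫ ω, |MTE (U ω) (X ω)| ∂μ) := by
    have hgm : ∀ n : ℕ, Measurable (fun ω => ∫⁻ u in Set.Ioc (0:ℝ) 1,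
        ENNReal.ofReal (min (n:ℝ) |MTE u (X ω)|)) := by
      intro n
      apply Measurable.lintegral_prod_right
        (f := fun ω u => ENNReal.ofReal (min (n:ℝ) |MTE u (X ω)|))
      exact ENNReal.measurable_ofReal.comp (measurable_const.min
        ((hMTEmeas.comp (measurable_snd.prodMk (hXm.comp measurable_fst))).abs))
    have hFeq : F = fun ω => ⨆ n : ℕ, ∫⁻ u in Set.Ioc (0:ℝ) 1,
        ENNReal.ofReal (min (n:ℝ) |MTE u (X ω)|) := by
      funext ω
      rw [hFdef]
      have h1 : (fun u => ENNReal.ofReal |MTE u (X ω)|)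
          = fun u => ⨆ n : ℕ, ENNReal.ofReal (min (n:ℝ) |MTE u (X ω)|) := by
        funext u; exact (sup_ofReal_min _).symm
      calc (∫⁻ u in Set.Ioc (0:ℝ) 1, ENNReal.ofReal |MTE u (X ω)|)
          = ∫⁻ u in Set.Ioc (0:ℝ) 1,
              ⨆ n : ℕ, ENNReal.ofReal (min (n:ℝ) |MTE u (X ω)|) := by rw [h1]
        _ = ⨆ n : ℕ, ∫⁻ u in Set.Ioc (0:ℝ) 1,
              ENNReal.ofReal (min (n:ℝ) |MTE u (X ω)|) := by
            refine lintegral_iSup (fun n => ?_) (fun m k hmk u => ?_)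
            · exact ENNReal.measurable_ofReal.comp (measurable_const.min (hMuX ω).abs)
            · exact ENNReal.ofReal_le_ofReal
                (min_le_min (by exact_mod_cast hmk) le_rfl)
    have hstep : ∀ n : ℕ, (∫⁻ ω, (∫⁻ u in Set.Ioc (0:ℝ) 1,
        ENNReal.ofReal (min (n:ℝ) |MTE u (X ω)|)) ∂μ)
        ≤ ENNReal.ofReal (∫ ω, |MTE (U ω) (X ω)| ∂μ) := by
      intro n
      have hInner_int : ∀ ω, Integrable (fun u => min (n:ℝ) |MTE u (X ω)|)
          ((volume : Measure ℝ).restrict (Set.Ioc (0:ℝ) 1)) := fun ω =>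
        ⟨(measurable_const.min (hMuX ω).abs).aestronglyMeasurable,
          HasFiniteIntegral.of_bounded (C := (n:ℝ)) (ae_of_all _ fun u => by
            simpa [Real.norm_eq_abs] using habs_min n (MTE u (X ω)))⟩
      have hIL : ∀ ω, (∫⁻ u in Set.Ioc (0:ℝ) 1,
          ENNReal.ofReal (min (n:ℝ) |MTE u (X ω)|))
          = ENNReal.ofReal (∫ u in Set.Ioc (0:ℝ) 1, min (n:ℝ) |MTE u (X ω)|) := fun ω =>
        (ofReal_integral_eq_lintegral_ofReal (hInner_int ω)
          (ae_of_all _ fun u => le_min (Nat.cast_nonneg n) (abs_nonneg _))).symm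
      have hOuter_meas : StronglyMeasurable
          (fun ω => ∫ u in Set.Ioc (0:ℝ) 1, min (n:ℝ) |MTE u (X ω)|) := by
        apply MeasureTheory.StronglyMeasurable.integral_prod_right'
          (f := fun p : Ω × ℝ => min (n:ℝ) |MTE p.2 (X p.1)|)
        exact (measurable_const.min
          ((hMTEmeas.comp (measurable_snd.prodMk (hXm.comp measurable_fst))).abs)).stronglyMeasurable
      have hInner_nonneg : ∀ ω, 0 ≤ ∫ u in Set.Ioc (0:ℝ) 1, min (n:ℝ) |MTE u (X ω)| :=
        fun ω => integral_nonneg fun u => le_min (Nat.cast_nonneg n) (abs_nonneg _)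
      have hInner_le : ∀ ω, (∫ u in Set.Ioc (0:ℝ) 1, min (n:ℝ) |MTE u (X ω)|) ≤ (n:ℝ) := by
        intro ω
        calc (∫ u in Set.Ioc (0:ℝ) 1, min (n:ℝ) |MTE u (X ω)|)
            ≤ ∫ _u in Set.Ioc (0:ℝ) 1, (n:ℝ) :=
              integral_mono (hInner_int ω) (integrable_const _)
                (fun u => min_le_left _ _)
          _ ≤ (n:ℝ) := by
              rw [integral_const]
              simp [Real.volume_Ioc]
      have hOuter_int : Integrable
          (fun ω => ∫ u in Set.Ioc (0:ℝ) 1, min (n:ℝ) |MTE u (X ω)|) μ :=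
        ⟨hOuter_meas.aestronglyMeasurable,
          HasFiniteIntegral.of_bounded (C := (n:ℝ)) (ae_of_all _ fun ω => by
            rw [Real.norm_eq_abs, abs_of_nonneg (hInner_nonneg ω)]
            exact hInner_le ω)⟩
      calc (∫⁻ ω, (∫⁻ u in Set.Ioc (0:ℝ) 1,
            ENNReal.ofReal (min (n:ℝ) |MTE u (X ω)|)) ∂μ)
          = ∫⁻ ω, ENNReal.ofReal
              (∫ u in Set.Ioc (0:ℝ) 1, min (n:ℝ) |MTE u (X ω)|) ∂μ := by
            exact lintegral_congr fun ω => hIL ω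
        _ = ENNReal.ofReal (∫ ω, (∫ u in Set.Ioc (0:ℝ) 1,
              min (n:ℝ) |MTE u (X ω)|) ∂μ) :=
            (ofReal_integral_eq_lintegral_ofReal hOuter_int
              (ae_of_all _ fun ω => hInner_nonneg ω)).symm
        _ = ENNReal.ofReal (∫ ω, min (n:ℝ) |MTE (U ω) (X ω)| ∂μ) := by rw [← hψEq n]
        _ ≤ ENNReal.ofReal (∫ ω, |MTE (U ω) (X ω)| ∂μ) := by
            apply ENNReal.ofReal_le_ofReal
            exact integral_mono
              ⟨((measurable_const.min (hMTEmeas.comp (hU.prodMk hXm)).abs)).aestronglyMeasurable,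
                HasFiniteIntegral.of_bounded (C := (n:ℝ)) (ae_of_all _ fun ω => by
                  simpa [Real.norm_eq_abs] using habs_min n (MTE (U ω) (X ω)))⟩
              hfi.abs (fun ω => min_le_right _ _)
    calc (∫⁻ ω, F ω ∂μ)
        = ⨆ n : ℕ, ∫⁻ ω, (∫⁻ u in Set.Ioc (0:ℝ) 1,
            ENNReal.ofReal (min (n:ℝ) |MTE u (X ω)|)) ∂μ := by
          rw [hFeq]
          exact lintegral_iSup hgm (fun m k hmk ω => lintegral_mono fun u =>
            ENNReal.ofReal_le_ofReal (min_le_min (by exact_mod_cast hmk) le_rfl))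
      _ ≤ ENNReal.ofReal (∫ ω, |MTE (U ω) (X ω)| ∂μ) := iSup_le hstep
  have hFfin : (∫⁻ ω, F ω ∂μ) ≠ ⊤ := ne_top_of_le_ne_top ENNReal.ofReal_ne_top hsup_le
  have hae_fin : ∀ᵐ ω ∂μ, F ω < ⊤ := ae_lt_top hFm hFfin
  have hae_int : ∀ᵐ ω ∂μ, Integrable (fun u => MTE u (X ω))
      ((volume : Measure ℝ).restrict (Set.Ioc (0:ℝ) 1)) := by
    filter_upwards [hae_fin] with ω hω
    refine ⟨(hMuX ω).aestronglyMeasurable, ?_⟩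
    have heq : (∫⁻ u in Set.Ioc (0:ℝ) 1, (‖MTE u (X ω)‖₊ : ℝ≥0∞)) = F ω := by
      rw [hFdef]
      exact lintegral_congr fun u => Real.enorm_eq_ofReal_abs _
    show (∫⁻ u in Set.Ioc (0:ℝ) 1, (‖MTE u (X ω)‖₊ : ℝ≥0∞)) < ⊤
    rw [heq]; exact hω
  have hbound_int : Integrable (fun ω => (F ω).toReal) μ :=
    integrable_toReal_of_lintegral_ne_top hFm.aemeasurable hFfin
  -- the abs of MTE integrates to (F ω).toReal
  have habsF : ∀ᵐ ω ∂μ, (∫ u in Set.Ioc (0:ℝ) 1, |MTE u (X ω)|) = (F ω).toReal := by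
    filter_upwards [] with ω
    rw [integral_eq_lintegral_of_nonneg_ae (ae_of_all _ fun u => abs_nonneg _)
      (hMuX ω).abs.aestronglyMeasurable, hFdef]
  -- Key 2 : ∫_A MTE(U, X) = ∫_A ∫₀¹ MTE(u, X)
  have key2 : ∫ ω in Z ⁻¹' G, MTE (U ω) (X ω) ∂μ
      = ∫ ω in Z ⁻¹' G, (∫ u in Set.Ioc (0:ℝ) 1, MTE u (X ω)) ∂μ := by
    have hT1 : Tendsto (fun n : ℕ => ∫ ω in Z ⁻¹' G,
        max (-(n:ℝ)) (min (n:ℝ) (MTE (U ω) (X ω))) ∂μ) atTop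
        (nhds (∫ ω in Z ⁻¹' G, MTE (U ω) (X ω) ∂μ)) := by
      refine tendsto_integral_of_dominated_convergence
        (bound := fun ω => |MTE (U ω) (X ω)|)
        (fun n => (((hφm n).comp (hU.prodMk hXm))).aestronglyMeasurable.restrict)
        hfi.abs.restrict
        (fun n => ae_of_all _ fun ω => by
          simpa [Real.norm_eq_abs] using trunc_abs_le n (MTE (U ω) (X ω)))
        (ae_of_all _ fun ω => trunc_tendsto _)
    have hT2 : Tendsto (fun n : ℕ => ∫ ω in Z ⁻¹' G,
        (∫ u in Set.Ioc (0:ℝ) 1, max (-(n:ℝ)) (min (n:ℝ) (MTE u (X ω)))) ∂μ) atTop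
        (nhds (∫ ω in Z ⁻¹' G, (∫ u in Set.Ioc (0:ℝ) 1, MTE u (X ω)) ∂μ)) := by
      refine tendsto_integral_of_dominated_convergence
        (bound := fun ω => (F ω).toReal)
        (fun n => ?_) hbound_int.restrict (fun n => ae_restrict_of_ae ?_)
        (ae_restrict_of_ae ?_)
      · refine StronglyMeasurable.aestronglyMeasurable ?_ |>.restrict
        apply MeasureTheory.StronglyMeasurable.integral_prod_right'
          (f := fun p : Ω × ℝ => max (-(n:ℝ)) (min (n:ℝ) (MTE p.2 (X p.1))))
        exact ((hφm n).comp (measurable_snd.prodMk (hXm.comp measurable_fst))).stronglyMeasurable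
      · filter_upwards [hae_int, habsF] with ω hω hωF
        have hφint : Integrable (fun u => max (-(n:ℝ)) (min (n:ℝ) (MTE u (X ω))))
            ((volume : Measure ℝ).restrict (Set.Ioc (0:ℝ) 1)) :=
          ⟨((hφm n).comp (measurable_id.prodMk measurable_const)).aestronglyMeasurable,
            HasFiniteIntegral.of_bounded (C := (n:ℝ)) (ae_of_all _ fun u => by
              simpa [Real.norm_eq_abs] using trunc_abs_le_n n (MTE u (X ω)))⟩
        calc ‖∫ u in Set.Ioc (0:ℝ) 1, max (-(n:ℝ)) (min (n:ℝ) (MTE u (X ω)))‖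
            ≤ ∫ u in Set.Ioc (0:ℝ) 1, ‖max (-(n:ℝ)) (min (n:ℝ) (MTE u (X ω)))‖ :=
              norm_integral_le_integral_norm _
          _ ≤ ∫ u in Set.Ioc (0:ℝ) 1, |MTE u (X ω)| := by
              simp only [Real.norm_eq_abs]
              exact integral_mono hφint.abs hω.abs (fun u => trunc_abs_le n _)
          _ = (F ω).toReal := hωF
      · filter_upwards [hae_int] with ω hω
        refine tendsto_integral_of_dominated_convergence
          (bound := fun u => |MTE u (X ω)|)
          (fun n => ((hφm n).comp
            (measurable_id.prodMk measurable_const)).aestronglyMeasurable)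
          hω.abs
          (fun n => ae_of_all _ fun u => by
            simpa [Real.norm_eq_abs] using trunc_abs_le n (MTE u (X ω)))
          (ae_of_all _ fun u => trunc_tendsto _)
    have hseq : (fun n : ℕ => ∫ ω in Z ⁻¹' G,
        max (-(n:ℝ)) (min (n:ℝ) (MTE (U ω) (X ω))) ∂μ)
        = fun n : ℕ => ∫ ω in Z ⁻¹' G,
            (∫ u in Set.Ioc (0:ℝ) 1, max (-(n:ℝ)) (min (n:ℝ) (MTE u (X ω)))) ∂μ :=
      funext hEq
    rw [hseq] at hT1
    exact tendsto_nhds_unique hT1 hT2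
  -- final assembly
  have hIf1 : (fun ω => if Z ω ∈ G then Y₁ ω else Y₀ ω)
      = fun ω => Y₀ ω + (Z ⁻¹' G).indicator (fun ω => Y₁ ω - Y₀ ω) ω := by
    funext ω
    by_cases hω : Z ω ∈ G <;>
      simp [Set.indicator_apply, Set.mem_preimage, hω]
  have hIf2 : (fun ω => if Z ω ∈ G then ∫ u in (0:ℝ)..1, MTE u (X ω) else 0)
      = (Z ⁻¹' G).indicator (fun ω => ∫ u in (0:ℝ)..1, MTE u (X ω)) := by
    funext ω
    by_cases hω : Z ω ∈ G <;>
      simp [Set.indicator_apply, Set.mem_preimage, hω]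
  rw [hIf1, hIf2, integral_add hY₀i (hDi.indicator hAm), integral_indicator hAm,
    integral_indicator hAm]
  congr 1
  calc ∫ ω in Z ⁻¹' G, (Y₁ ω - Y₀ ω) ∂μ
      = ∫ ω in Z ⁻¹' G, MTE (U ω) (X ω) ∂μ := key1
    _ = ∫ ω in Z ⁻¹' G, (∫ u in Set.Ioc (0:ℝ) 1, MTE u (X ω)) ∂μ := key2
    _ = ∫ ω in Z ⁻¹' G, (∫ u in (0:ℝ)..1, MTE u (X ω)) ∂μ :=
      integral_congr_ae (ae_of_all _ fun ω =>
        (intervalIntegral.integral_of_le (zero_le_one : (0:ℝ) ≤ 1)).symm)
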